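/- arXiv:1802.06330 — 6 statements merged into one kernel-verified Lean document; each statement's English description precedes it below -/
import Mathlib

section
/- If A is a divisibility monoid containing a non-invertible element, then F(A) has no terminal object. -/
open Finset

/-- A function `f : [M] → [N]` is divisibility-constrained by tuples `x`, `y` when
`x n` divides the product of `y` over the fiber `f⁻¹(n)`; these are the morphisms
`(x_n) → (y_m)` in the category of factorization of a divisibility monoid. -/
def DivConstrained {A : Type*} [CommMonoid A] {N M : ℕ} (x : Fin N → A) (y : Fin M → A)
    (f : Fin M → Fin N) : Prop :=
  ∀ n : Fin N, x n ∣ ∏ m ∈ Finset.univ.filter (fun m => f m = n), y m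

/-- A morphism is a weak equivalence when, for each `n`, the element `r` with
`r * x n = ∏_{m ∈ f⁻¹(n)} y m` is invertible. -/
def IsWeakEquiv {A : Type*} [CommMonoid A] {N M : ℕ} (x : Fin N → A) (y : Fin M → A)
    (f : Fin M → Fin N) : Prop :=
  ∀ (n : Fin N) (r : A), r * x n = ∏ m ∈ Finset.univ.filter (fun m => f m = n), y m → IsUnit r

/-- If a divisibility monoid has a non-invertible element, then F(A) has no
terminal object. -/
theorem stmt6 (A : Type*) [CancelCommMonoid A] (a : A) (ha : ¬ IsUnit a) :
    ¬ ∃ (P : ℕ) (z : Fin P → A),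
        ∀ (N : ℕ) (x : Fin N → A), ∃! f : Fin P → Fin N, DivConstrained x z f := by
  rintro ⟨P, z, h⟩
  set Z := ∏ m, z m with hZ
  have key : ∀ b : A, b ∣ Z := by
    intro b
    obtain ⟨f, hf, -⟩ := h 1 (fun _ => b)
    have h0 := hf 0
    have : Finset.univ.filter (fun m => f m = (0 : Fin 1)) = Finset.univ := by
      ext m; simp [Subsingleton.elim (f m) 0]
    rwa [this] at h0
  obtain ⟨c, hc⟩ := key (Z * Z)
  have hZu : IsUnit Z := by
    have h1 : Z * 1 = Z * (Z * c) := by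
      rw [mul_one]; nth_rewrite 1 [hc]; rw [mul_assoc]
    exact IsUnit.of_mul_eq_one (a := Z) c (mul_left_cancel h1).symm
  exact ha (isUnit_of_dvd_unit (key a) hZu)
end

section
/- Let A be a divisibility monoid and f̂ : (x_n) → (y_m) a morphism in F(A). The underlying function f : [M] → [N] is injective if and only if the morphism f̂ is an epimorphism in F(A). -/
open Finset

/-- `f` is injective iff `f̂` is an epimorphism in F(A). -/
theorem stmt8 (A : Type*) [CancelCommMonoid A] {N M : ℕ}
    (x : Fin N → A) (y : Fin M → A) (f : Fin M → Fin N)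
    (hf : DivConstrained x y f) :
    Function.Injective f ↔
      ∀ (P : ℕ) (z : Fin P → A) (g h : Fin P → Fin M),
        DivConstrained y z g → DivConstrained y z h →
        f ∘ g = f ∘ h → g = h := by
  constructor
  · intro hinj P z g h _ _ hgh
    funext k
    exact hinj (congrFun hgh k)
  · intro hepi m1 m2 hm
    set z : Fin (M + 1) → A := Fin.snoc y 1 with hz
    set g : Fin (M + 1) → Fin M := Fin.snoc id m2 with hgdef
    set h : Fin (M + 1) → Fin M := Fin.snoc id m1 with hhdef
    have hg : DivConstrained y z g := by
      intro m
      have hmem : Fin.castSucc m ∈ univ.filter (fun k => g k = m) := by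
        simp [hgdef, Fin.snoc_castSucc]
      have := Finset.dvd_prod_of_mem z hmem
      simpa [hz, Fin.snoc_castSucc] using this
    have hh : DivConstrained y z h := by
      intro m
      have hmem : Fin.castSucc m ∈ univ.filter (fun k => h k = m) := by
        simp [hhdef, Fin.snoc_castSucc]
      have := Finset.dvd_prod_of_mem z hmem
      simpa [hz, Fin.snoc_castSucc] using this
    have hfg : f ∘ g = f ∘ h := by
      funext k
      refine Fin.lastCases ?_ ?_ k
      · simp [hgdef, hhdef, Fin.snoc_last, hm]
      · intro i; simp [hgdef, hhdef, Fin.snoc_castSucc]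
    have heq := hepi (M + 1) z g h hg hh hfg
    have := congrFun heq (Fin.last M)
    simpa [hgdef, hhdef, Fin.snoc_last] using this.symm
end

section
/- Let A be a divisibility monoid and f̂ : (x_n) → (y_m) a morphism in F(A). The underlying function f : [M] → [N] is surjective if and only if the morphism f̂ is a monomorphism in F(A). -/
open Finset

/-- `f` is surjective iff `f̂` is a monomorphism in F(A). -/
theorem stmt9 (A : Type*) [CancelCommMonoid A] {N M : ℕ}
    (x : Fin N → A) (y : Fin M → A) (f : Fin M → Fin N)
    (hf : DivConstrained x y f) :
    Function.Surjective f ↔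
      ∀ (Q : ℕ) (w : Fin Q → A) (g h : Fin N → Fin Q),
        DivConstrained w x g → DivConstrained w x h →
        g ∘ f = h ∘ f → g = h := by
  constructor
  · intro hs Q w g h _ _ he
    funext n
    obtain ⟨m, rfl⟩ := hs n
    exact congrFun he m
  · intro H n
    by_contra hn
    push_neg at hn
    have hgh : (fun _ : Fin N => (0 : Fin 2)) = (fun k => if k = n then 1 else 0) := by
      refine H 2 (fun _ => 1) _ _ (fun q => one_dvd _) (fun q => one_dvd _) ?_
      funext m
      simp [Function.comp, hn m]
    have := congrFun hgh n
    simp at this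
end

section
/- Let A be a divisibility monoid and r ∈ A. The following are equivalent: (i) r is invertible in A; (ii) every morphism f̂ : (x_n) → (y_m) in F(A) with r · ∏_n x_n = ∏_m y_m is a weak equivalence; (iii) some morphism f̂ : (x_n) → (y_m) with r · ∏_n x_n = ∏_m y_m is a weak equivalence. -/
open Finset

lemma fiber_prod {A : Type*} [CommMonoid A] {N M : ℕ} (y : Fin M → A) (f : Fin M → Fin N) :
    ∏ n : Fin N, ∏ m ∈ Finset.univ.filter (fun m => f m = n), y m = ∏ m, y m :=
  Finset.prod_fiberwise_of_maps_to (fun m _ => Finset.mem_univ (f m)) y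

lemma key {A : Type*} [CancelCommMonoid A] {r : A} {N M : ℕ} {x : Fin N → A} {y : Fin M → A}
    {f : Fin M → Fin N} (hd : DivConstrained x y f)
    (hp : r * ∏ n, x n = ∏ m, y m) :
    ∃ c : Fin N → A, (∀ n, c n * x n = ∏ m ∈ Finset.univ.filter (fun m => f m = n), y m)
      ∧ r = ∏ n, c n := by
  choose c hc using fun n => (hd n)
  refine ⟨c, fun n => by rw [mul_comm]; exact (hc n).symm, ?_⟩
  have h : (∏ n, c n) * ∏ n, x n = ∏ m, y m := by
    rw [← Finset.prod_mul_distrib, ← fiber_prod y f]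
    exact Finset.prod_congr rfl fun n _ => by rw [mul_comm]; exact (hc n).symm
  exact mul_right_cancel (hp.trans h.symm)

/-- `r` is invertible iff every morphism with associated element `r` is a weak
equivalence, iff some morphism with associated element `r` is a weak equivalence. -/
theorem stmt11 (A : Type*) [CancelCommMonoid A] (r : A) :
    (IsUnit r ↔
      ∀ (N M : ℕ) (x : Fin N → A) (y : Fin M → A) (f : Fin M → Fin N),
        DivConstrained x y f → r * ∏ n, x n = ∏ m, y m → IsWeakEquiv x y f) ∧
    (IsUnit r ↔
      ∃ (N M : ℕ) (x : Fin N → A) (y : Fin M → A) (f : Fin M → Fin N),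
        DivConstrained x y f ∧ r * ∏ n, x n = ∏ m, y m ∧ IsWeakEquiv x y f) := by
  have fwd : IsUnit r → ∀ (N M : ℕ) (x : Fin N → A) (y : Fin M → A) (f : Fin M → Fin N),
      DivConstrained x y f → r * ∏ n, x n = ∏ m, y m → IsWeakEquiv x y f := by
    intro hr N M x y f hd hp n s hs
    obtain ⟨c, hc, hrc⟩ := key hd hp
    have hcu : IsUnit (c n) := by
      have hprod : IsUnit (∏ k, c k) := hrc ▸ hr
      rw [← Finset.mul_prod_erase Finset.univ c (Finset.mem_univ n)] at hprod
      exact isUnit_of_mul_isUnit_left hprod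
    have : s = c n := mul_right_cancel (hs.trans (hc n).symm)
    exact this ▸ hcu
  have bwd : (∃ (N M : ℕ) (x : Fin N → A) (y : Fin M → A) (f : Fin M → Fin N),
      DivConstrained x y f ∧ r * ∏ n, x n = ∏ m, y m ∧ IsWeakEquiv x y f) → IsUnit r := by
    rintro ⟨N, M, x, y, f, hd, hp, hw⟩
    obtain ⟨c, hc, hrc⟩ := key hd hp
    rw [hrc]
    exact Finset.prod_induction c IsUnit (fun a b => IsUnit.mul) isUnit_one
      (fun k _ => hw k (c k) (hc k))
  refine ⟨⟨fwd, ?_⟩, ⟨fun hr => ?_, bwd⟩⟩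
  · intro h
    have hd : DivConstrained (fun _ : Fin 1 => (1 : A)) (fun _ : Fin 1 => r) id := by
      intro n; exact one_dvd _
    have hp : r * ∏ _n : Fin 1, (1 : A) = ∏ _m : Fin 1, r := by simp
    exact h 1 1 _ _ id hd hp 0 r (by simp [Finset.filter_true_of_mem])
  · refine ⟨1, 1, fun _ => 1, fun _ => r, id, fun n => one_dvd _, by simp, ?_⟩
    intro n s hs
    simp only [id_eq] at hs
    rw [Finset.filter_true_of_mem (fun m _ => Subsingleton.elim m n)] at hs
    simp at hs
    exact hs ▸ hr
end

section
/- Let A be a divisibility monoid and r ∈ A. The following are equivalent: (i) r is irreducible in A; (ii) every morphism f̂ : (x_n) → (y_m) in F(A) with r·∏x_n = ∏y_m is weakly irreducible; (iii) the morphism (1) → (r) is weakly irreducible; (iv) some morphism f̂ : (x_n) → (y_m) with r·∏x_n = ∏y_m is weakly irreducible. -/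
open Finset

/-- A morphism is weakly irreducible when it is not a weak equivalence and in
every factorization `f̂ = ĝ ∘ ĥ` one of the factors is a weak equivalence. -/
def WeaklyIrred {A : Type*} [CommMonoid A] {N M : ℕ} (x : Fin N → A) (y : Fin M → A)
    (f : Fin M → Fin N) : Prop :=
  ¬ IsWeakEquiv x y f ∧
    ∀ (P : ℕ) (z : Fin P → A) (h : Fin P → Fin N) (g : Fin M → Fin P),
      DivConstrained x z h → DivConstrained z y g → h ∘ g = f →
      IsWeakEquiv x z h ∨ IsWeakEquiv z y g

section Aux

variable {A : Type*} [CancelCommMonoid A] {N M : ℕ}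

/-- A factor of a unit in a finite product is a unit. -/
lemma aux_isUnit_of_prod {ι : Type*} [DecidableEq ι] {s : Finset ι} {g : ι → A} {n : ι}
    (hn : n ∈ s) (h : IsUnit (∏ i ∈ s, g i)) : IsUnit (g n) := by
  rw [← Finset.mul_prod_erase s g hn] at h
  exact isUnit_of_mul_isUnit_left h

lemma aux_prod_of_units {ι : Type*} {s : Finset ι} {g : ι → A}
    (h : ∀ i ∈ s, IsUnit (g i)) : IsUnit (∏ i ∈ s, g i) :=
  Finset.prod_induction g IsUnit (fun _ _ ha hb => ha.mul hb) isUnit_one h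

/-- Choice of per-fiber cofactors. -/
lemma exists_assoc (x : Fin N → A) (y : Fin M → A) (f : Fin M → Fin N)
    (hd : DivConstrained x y f) :
    ∃ s : Fin N → A, ∀ n, s n * x n = ∏ m ∈ Finset.univ.filter (fun m => f m = n), y m := by
  choose c hc using hd
  exact ⟨c, fun n => by rw [mul_comm, ← hc n]⟩

lemma prod_assoc_eq (x : Fin N → A) (y : Fin M → A) (f : Fin M → Fin N) (s : Fin N → A)
    (hs : ∀ n, s n * x n = ∏ m ∈ Finset.univ.filter (fun m => f m = n), y m) :
    (∏ n, s n) * ∏ n, x n = ∏ m, y m := by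
  rw [← Finset.prod_mul_distrib]
  calc ∏ n, s n * x n = ∏ n, ∏ m ∈ Finset.univ.filter (fun m => f m = n), y m := by
        exact Finset.prod_congr rfl fun n _ => hs n
    _ = ∏ m, y m := Finset.prod_fiberwise_of_maps_to (fun m _ => Finset.mem_univ (f m)) y

/-- Weak equivalence is equivalent to the associated element being a unit. -/
lemma isWeakEquiv_iff_isUnit (x : Fin N → A) (y : Fin M → A) (f : Fin M → Fin N)
    (hd : DivConstrained x y f) (r : A) (hr : r * ∏ n, x n = ∏ m, y m) :
    IsWeakEquiv x y f ↔ IsUnit r := by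
  obtain ⟨s, hs⟩ := exists_assoc x y f hd
  have hrs : r = ∏ n, s n := mul_right_cancel (hr.trans (prod_assoc_eq x y f s hs).symm)
  constructor
  · intro hw
    rw [hrs]
    exact aux_prod_of_units fun n _ => hw n (s n) (hs n)
  · intro hu n t ht
    have h1 : t = s n := mul_right_cancel (ht.trans (hs n).symm)
    rw [h1]
    exact aux_isUnit_of_prod (Finset.mem_univ n) (hrs ▸ hu)

/-- Irreducible element gives weakly irreducible morphism. -/
lemma fwd_lemma {r : A} (hr : Irreducible r) (x : Fin N → A) (y : Fin M → A) (f : Fin M → Fin N)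
    (hd : DivConstrained x y f) (he : r * ∏ n, x n = ∏ m, y m) : WeaklyIrred x y f := by
  constructor
  · intro hw
    exact hr.not_isUnit ((isWeakEquiv_iff_isUnit x y f hd r he).mp hw)
  · intro P z h g hxz hzy hcomp
    obtain ⟨s1, hs1⟩ := exists_assoc x z h hxz
    obtain ⟨s2, hs2⟩ := exists_assoc z y g hzy
    have e1 : (∏ n, s1 n) * ∏ n, x n = ∏ p, z p := prod_assoc_eq x z h s1 hs1
    have e2 : (∏ p, s2 p) * ∏ p, z p = ∏ m, y m := prod_assoc_eq z y g s2 hs2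
    have e3 : ((∏ n, s1 n) * (∏ p, s2 p)) * ∏ n, x n = ∏ m, y m := by
      rw [mul_comm (∏ n, s1 n), mul_assoc, e1, e2]
    have hreq : r = (∏ n, s1 n) * (∏ p, s2 p) := mul_right_cancel (he.trans e3.symm)
    rcases hr.isUnit_or_isUnit hreq with hu | hu
    · exact Or.inl ((isWeakEquiv_iff_isUnit x z h hxz _ e1).mpr hu)
    · exact Or.inr ((isWeakEquiv_iff_isUnit z y g hzy _ e2).mpr hu)

/-- Weakly irreducible morphism gives irreducible associated element. -/
lemma bwd_lemma {r : A} (x : Fin N → A) (y : Fin M → A) (f : Fin M → Fin N)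
    (hd : DivConstrained x y f) (he : r * ∏ n, x n = ∏ m, y m)
    (hw : WeaklyIrred x y f) : Irreducible r := by
  obtain ⟨hne, hfac⟩ := hw
  have hru : ¬ IsUnit r := fun hu => hne ((isWeakEquiv_iff_isUnit x y f hd r he).mpr hu)
  obtain ⟨s, hs⟩ := exists_assoc x y f hd
  have hrs : r = ∏ n, s n := mul_right_cancel (he.trans (prod_assoc_eq x y f s hs).symm)
  -- key splitting lemma
  have key : ∀ t u : Fin N → A, (∀ n, t n * u n = s n) →
      IsUnit (∏ n, t n) ∨ IsUnit (∏ n, u n) := by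
    intro t u htu
    set z : Fin N → A := fun n => x n * t n with hz
    have fib_id : ∀ n : Fin N, Finset.univ.filter (fun p : Fin N => id p = n) = {n} := by
      intro n; ext p; simp [eq_comm]
    have h1 : DivConstrained x z id := by
      intro n
      rw [fib_id n, Finset.prod_singleton]
      exact dvd_mul_right _ _
    have h2 : DivConstrained z y f := by
      intro n
      refine ⟨u n, ?_⟩
      simp only [hz]
      rw [← hs n, ← htu n]
      simp [mul_comm, mul_left_comm, mul_assoc]
    have e1 : (∏ n, t n) * ∏ n, x n = ∏ n, z n := by
      rw [← Finset.prod_mul_distrib]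
      exact Finset.prod_congr rfl fun n _ => mul_comm _ _
    have e2 : (∏ n, u n) * ∏ n, z n = ∏ m, y m := by
      rw [← prod_assoc_eq x y f s hs, ← Finset.prod_mul_distrib, ← Finset.prod_mul_distrib]
      refine Finset.prod_congr rfl fun n _ => ?_
      simp only [hz]
      calc u n * (x n * t n) = t n * u n * x n := by
            simp [mul_comm, mul_left_comm, mul_assoc]
        _ = s n * x n := by rw [htu n]
    rcases hfac N z id f h1 h2 rfl with hu | hu
    · exact Or.inl ((isWeakEquiv_iff_isUnit x z id h1 _ e1).mp hu)
    · exact Or.inr ((isWeakEquiv_iff_isUnit z y f h2 _ e2).mp hu)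
  -- at most one nonunit among the s n
  have hone : ∀ n1 n2 : Fin N, n1 ≠ n2 → ¬ IsUnit (s n1) → IsUnit (s n2) := by
    intro n1 n2 hne12 hnu
    have := key (fun n => if n = n1 then s n1 else 1) (fun n => if n = n1 then 1 else s n)
      (fun n => by by_cases hn : n = n1 <;> simp [hn])
    rcases this with hu | hu
    · refine absurd ?_ hnu
      simpa using hu
    · have := aux_isUnit_of_prod (Finset.mem_univ n2) hu
      simpa [hne12.symm] using this
  -- there is a nonunit s n0
  have hex : ∃ n0, ¬ IsUnit (s n0) := by
    by_contra hc
    push_neg at hc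
    exact hru (hrs ▸ aux_prod_of_units fun n _ => hc n)
  obtain ⟨n0, hn0⟩ := hex
  -- s n0 is irreducible
  have hirr : Irreducible (s n0) := by
    refine ⟨hn0, fun a b hab => ?_⟩
    have := key (fun n => if n = n0 then a else 1) (fun n => if n = n0 then b else s n)
      (fun n => by by_cases hn : n = n0 <;> simp [hn, ← hab])
    rcases this with hu | hu
    · left
      simpa using hu
    · right
      have := aux_isUnit_of_prod (Finset.mem_univ n0) hu
      simpa using this
  -- r is associated to s n0
  have hvu : IsUnit (∏ n ∈ Finset.univ.erase n0, s n) :=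
    aux_prod_of_units fun n hn => hone n0 n (Ne.symm (Finset.ne_of_mem_erase hn)) hn0
  have hassoc : Associated (s n0) r := by
    have : r = s n0 * ∏ n ∈ Finset.univ.erase n0, s n := by
      rw [hrs, Finset.mul_prod_erase Finset.univ s (Finset.mem_univ n0)]
    rw [this]
    exact (associated_mul_unit_left _ _ hvu).symm
  exact hassoc.irreducible hirr

end Aux

/-- `r` is irreducible in `A` iff every (equivalently, some) morphism with
associated element `r` is weakly irreducible, iff the morphism `(1) → (r)` is
weakly irreducible. -/
theorem stmt17 (A : Type*) [CancelCommMonoid A] (r : A) :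
    (Irreducible r ↔
      ∀ (N M : ℕ) (x : Fin N → A) (y : Fin M → A) (f : Fin M → Fin N),
        DivConstrained x y f → r * ∏ n, x n = ∏ m, y m → WeaklyIrred x y f) ∧
    (Irreducible r ↔
      WeaklyIrred (fun _ : Fin 1 => (1 : A)) (fun _ : Fin 1 => r) id) ∧
    (Irreducible r ↔
      ∃ (N M : ℕ) (x : Fin N → A) (y : Fin M → A) (f : Fin M → Fin N),
        DivConstrained x y f ∧ r * ∏ n, x n = ∏ m, y m ∧ WeaklyIrred x y f) := by
  have hdc : DivConstrained (fun _ : Fin 1 => (1 : A)) (fun _ : Fin 1 => r) id :=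
    fun n => one_dvd _
  have hpe : r * ∏ _n : Fin 1, (1 : A) = ∏ _m : Fin 1, r := by simp
  refine ⟨⟨fun hr N M x y f hd he => fwd_lemma hr x y f hd he,
      fun h => bwd_lemma _ _ _ hdc hpe (h 1 1 _ _ id hdc hpe)⟩,
    ⟨fun hr => fwd_lemma hr _ _ _ hdc hpe, fun h => bwd_lemma _ _ _ hdc hpe h⟩,
    ⟨fun hr => ⟨1, 1, _, _, id, hdc, hpe, fwd_lemma hr _ _ _ hdc hpe⟩, ?_⟩⟩
  rintro ⟨N, M, x, y, f, hd, he, hw⟩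
  exact bwd_lemma x y f hd he hw
end

section
/- Let A be a divisibility monoid and r ∈ A. The following are equivalent: (i) r is prime in A; (ii) every morphism f̂ : (x_n) → (y_m) in F(A) with r·∏x_n = ∏y_m is weakly prime; (iii) the 1-tuple (r) is weakly prime (i.e., the morphism (1) → (r) is weakly prime); (iv) some morphism with r·∏x_n = ∏y_m is weakly prime. Consequently, every weakly prime morphism is weakly irreducible. -/
open Finset

/-- A morphism with associated element `s` is weakly prime when it is not a weak
equivalence and whenever it weakly divides a composite `ĝ ∘ ĥ` (whose associated
element is the product `q * r` of the associated elements of the factors), it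
weakly divides `ĝ` or `ĥ`. -/
def WeaklyPrime {A : Type*} [CommMonoid A] {N M : ℕ} (x : Fin N → A) (y : Fin M → A)
    (f : Fin M → Fin N) : Prop :=
  ¬ IsWeakEquiv x y f ∧
    ∀ (s : A), s * ∏ n, x n = ∏ m, y m →
      ∀ (P Q R : ℕ) (a : Fin P → A) (b : Fin Q → A) (c : Fin R → A)
        (h : Fin Q → Fin P) (g : Fin R → Fin Q) (r q : A),
        DivConstrained a b h → DivConstrained b c g →
        r * ∏ p, a p = ∏ k, b k → q * ∏ k, b k = ∏ k, c k →
        s ∣ q * r → s ∣ r ∨ s ∣ q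

/-- `r` is prime in `A`: not invertible, and `r ∣ b*c` implies `r ∣ b` or `r ∣ c`. -/
def IsPrimeElt {A : Type*} [CommMonoid A] (r : A) : Prop :=
  ¬ IsUnit r ∧ ∀ b c : A, r ∣ b * c → r ∣ b ∨ r ∣ c


section Helpers

variable {A : Type*} [CancelCommMonoid A] {N M : ℕ} {x : Fin N → A} {y : Fin M → A}
  {f : Fin M → Fin N}

lemma exists_quot (dc : DivConstrained x y f) :
    ∃ t : Fin N → A, (∀ n, x n * t n = ∏ m ∈ Finset.univ.filter (fun m => f m = n), y m) ∧
      (∏ n, t n) * ∏ n, x n = ∏ m, y m := by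
  choose t ht using dc
  refine ⟨t, fun n => (ht n).symm, ?_⟩
  rw [mul_comm, ← Finset.prod_mul_distrib,
    Finset.prod_congr rfl (fun n _ => (ht n).symm)]
  exact Finset.prod_fiberwise_of_maps_to (fun m _ => Finset.mem_univ (f m)) y

lemma weakEquiv_iff_isUnit {r : A} (dc : DivConstrained x y f)
    (hr : r * ∏ n, x n = ∏ m, y m) : IsWeakEquiv x y f ↔ IsUnit r := by
  obtain ⟨t, ht, htp⟩ := exists_quot dc
  have hrt : r = ∏ n, t n := mul_right_cancel (hr.trans htp.symm)
  constructor
  · intro hwe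
    rw [hrt]
    exact Finset.prod_induction _ IsUnit (fun a b => IsUnit.mul) isUnit_one
      (fun n _ => hwe n (t n) (by rw [mul_comm]; exact ht n))
  · intro hu n s hs
    have : s = t n := mul_right_cancel (a := s) (b := x n)
      (by rw [hs, ← ht n, mul_comm])
    rw [this]
    exact isUnit_of_dvd_unit (hrt ▸ Finset.dvd_prod_of_mem t (Finset.mem_univ n)) hu

/-- A weakly prime morphism with associated element `r` witnesses primality of `r`. -/
lemma isPrimeElt_of_weaklyPrime {r : A} (dc : DivConstrained x y f)
    (hr : r * ∏ n, x n = ∏ m, y m) (wp : WeaklyPrime x y f) : IsPrimeElt r := by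
  constructor
  · exact fun hu => wp.1 ((weakEquiv_iff_isUnit dc hr).mpr hu)
  · intro b c hbc
    have h1 : DivConstrained (fun _ : Fin 1 => (1 : A)) (fun _ : Fin 1 => b) id :=
      fun n => one_dvd _
    have h2 : DivConstrained (fun _ : Fin 1 => b) (fun _ : Fin 1 => b * c) id := by
      intro n
      have : (Finset.univ.filter (fun m : Fin 1 => id m = n)) = Finset.univ := by
        ext m; simp [Subsingleton.elim m n]
      rw [this, Fin.prod_univ_one]
      exact Dvd.intro c rfl
    have := wp.2 r hr 1 1 1 (fun _ => (1 : A)) (fun _ => b) (fun _ => b * c) id id b c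
      h1 h2 (by simp) (by rw [Fin.prod_univ_one, Fin.prod_univ_one, mul_comm])
      (by rwa [mul_comm c b])
    tauto

lemma weaklyPrime_of_isPrimeElt {r : A} (hp : IsPrimeElt r) (dc : DivConstrained x y f)
    (hr : r * ∏ n, x n = ∏ m, y m) : WeaklyPrime x y f := by
  constructor
  · exact fun hwe => hp.1 ((weakEquiv_iff_isUnit dc hr).mp hwe)
  · intro s hs P Q R a b c h g r' q _ _ _ _ hdvd
    have : s = r := mul_right_cancel (hs.trans hr.symm)
    subst this
    exact (hp.2 q r' hdvd).symm

end Helpers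

/-- `r` is prime in `A` iff every (equivalently, some) morphism with associated
element `r` is weakly prime, iff the 1-tuple `(r)` is weakly prime; moreover every
weakly prime morphism is weakly irreducible. -/

theorem stmt18 (A : Type*) [CancelCommMonoid A] (r : A) :
    (IsPrimeElt r ↔
      ∀ (N M : ℕ) (x : Fin N → A) (y : Fin M → A) (f : Fin M → Fin N),
        DivConstrained x y f → r * ∏ n, x n = ∏ m, y m → WeaklyPrime x y f) ∧
    (IsPrimeElt r ↔
      WeaklyPrime (fun _ : Fin 1 => (1 : A)) (fun _ : Fin 1 => r) id) ∧
    (IsPrimeElt r ↔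
      ∃ (N M : ℕ) (x : Fin N → A) (y : Fin M → A) (f : Fin M → Fin N),
        DivConstrained x y f ∧ r * ∏ n, x n = ∏ m, y m ∧ WeaklyPrime x y f) ∧
    (∀ (N M : ℕ) (x : Fin N → A) (y : Fin M → A) (f : Fin M → Fin N),
        DivConstrained x y f → WeaklyPrime x y f → WeaklyIrred x y f) := by
  have base_dc : DivConstrained (fun _ : Fin 1 => (1 : A)) (fun _ : Fin 1 => r) id :=
    fun n => one_dvd _
  have base_eq : r * ∏ _n : Fin 1, (1 : A) = ∏ _m : Fin 1, r := by simp
  refine ⟨⟨fun hp N M x y f dc hr => weaklyPrime_of_isPrimeElt hp dc hr,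
    fun H => isPrimeElt_of_weaklyPrime base_dc base_eq
      (H 1 1 _ _ id base_dc base_eq)⟩,
    ⟨fun hp => weaklyPrime_of_isPrimeElt hp base_dc base_eq,
    fun wp => isPrimeElt_of_weaklyPrime base_dc base_eq wp⟩,
    ⟨fun hp => ⟨1, 1, _, _, id, base_dc, base_eq,
      weaklyPrime_of_isPrimeElt hp base_dc base_eq⟩,
    fun ⟨N, M, x, y, f, dc, hr, wp⟩ => isPrimeElt_of_weaklyPrime dc hr wp⟩,
    ?_⟩
  intro N M x y f dc wp
  refine ⟨wp.1, ?_⟩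
  intro P z h g dch dcg hcomp
  obtain ⟨t1, ht1, ht1p⟩ := exists_quot dch
  obtain ⟨t2, ht2, ht2p⟩ := exists_quot dcg
  set r1 := ∏ n, t1 n with hr1
  set r2 := ∏ k, t2 k with hr2
  have hs : (r2 * r1) * ∏ n, x n = ∏ m, y m := by
    rw [mul_assoc, ht1p, ht2p]
  have := wp.2 (r2 * r1) hs N P M x z y h g r1 r2 dch dcg ht1p ht2p dvd_rfl
  rcases this with hd | hd
  · -- r2 * r1 ∣ r1 : then r2 is a unit, so g is a weak equivalence
    right
    obtain ⟨e, he⟩ := hd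
    have : r2 * e = 1 := by
      have : (1 : A) * r1 = (r2 * e) * r1 := by
        rw [one_mul]; nth_rewrite 1 [he]; exact mul_right_comm r2 r1 e
      exact (mul_right_cancel this).symm
    exact (weakEquiv_iff_isUnit dcg ht2p).mpr (IsUnit.of_mul_eq_one _ this)
  · -- r2 * r1 ∣ r2 : then r1 is a unit, so h is a weak equivalence
    left
    obtain ⟨e, he⟩ := hd
    have : r1 * e = 1 := by
      have : (1 : A) * r2 = (r1 * e) * r2 := by
        rw [one_mul]; nth_rewrite 1 [he]; rw [mul_comm r2 r1]; exact mul_right_comm r1 r2 e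
      exact (mul_right_cancel this).symm
    exact (weakEquiv_iff_isUnit dch ht1p).mpr (IsUnit.of_mul_eq_one _ this)
end
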